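/- Let f = g + conj(h) be harmonic with g, h holomorphic, f nonvanishing and f avoiding the negative real axis on its domain, and let p > 1. Then locally Δ(f^p) = p(p−1) f^{p−2}(f_x² + f_y²) = 4 p(p−1) f^{p−2} g'(z) conj(h'(z)), where f^p is a continuous branch of the p-th power. -/

import Mathlib

open Complex

/-- Planar Laplacian of a function on `ℂ`. -/
noncomputable def lapC (f : ℂ → ℂ) (z : ℂ) : ℂ :=
  fderiv ℝ (fun w => fderiv ℝ f w 1) z 1
    + fderiv ℝ (fun w => fderiv ℝ f w Complex.I) z Complex.I

/-- The real-linear map `v ↦ a * v + b * conj v`. -/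
noncomputable def Lab (a b : ℂ) : ℂ →L[ℝ] ℂ :=
  a • (ContinuousLinearMap.id ℝ ℂ) + b • (Complex.conjCLE : ℂ ≃L[ℝ] ℂ).toContinuousLinearMap

lemma Lab_apply (a b v : ℂ) : Lab a b v = a * v + b * (starRingEnd ℂ) v := by
  simp [Lab, smul_eq_mul]

lemma hasFDerivAt_addConj {g h : ℂ → ℂ} {g' h' : ℂ} {w : ℂ}
    (hg : HasDerivAt g g' w) (hh : HasDerivAt h h' w) :
    HasFDerivAt (fun x => g x + (starRingEnd ℂ) (h x)) (Lab g' ((starRingEnd ℂ) h')) w := by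
  have h1 : HasFDerivAt g (g' • (1 : ℂ →L[ℝ] ℂ)) w := hg.complexToReal_fderiv
  have h2 : HasFDerivAt h (h' • (1 : ℂ →L[ℝ] ℂ)) w := hh.complexToReal_fderiv
  have h3 : HasFDerivAt (fun x => (starRingEnd ℂ) (h x))
      ((Complex.conjCLE : ℂ ≃L[ℝ] ℂ).toContinuousLinearMap.comp (h' • (1 : ℂ →L[ℝ] ℂ))) w :=
    ((Complex.conjCLE : ℂ ≃L[ℝ] ℂ).toContinuousLinearMap.hasFDerivAt (x := h w)).comp w h2
  have h4 : HasFDerivAt (fun x => g x + (starRingEnd ℂ) (h x)) (g' • (1 : ℂ →L[ℝ] ℂ) + _) w := h1.add h3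
  convert h4 using 1
  ext v
  simp [Lab, smul_eq_mul, map_mul]

lemma hasFDerivAt_cpow_comp {f : ℂ → ℂ} {a b : ℂ} {w : ℂ} (c : ℂ)
    (hf : HasFDerivAt f (Lab a b) w) (h0 : f w ∈ Complex.slitPlane) :
    HasFDerivAt (fun x => f x ^ c)
      (Lab (c * f w ^ (c - 1) * a) (c * f w ^ (c - 1) * b)) w := by
  have h1 : HasFDerivAt (fun y : ℂ => y ^ c)
      ((c * f w ^ (c - 1)) • (1 : ℂ →L[ℝ] ℂ)) (f w) :=
    (Complex.hasStrictDerivAt_cpow_const h0).hasDerivAt.complexToReal_fderiv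
  have h2 : HasFDerivAt (fun x => f x ^ c) (((c * f w ^ (c - 1)) • (1 : ℂ →L[ℝ] ℂ)).comp (Lab a b)) w := h1.comp w hf
  convert h2 using 1
  ext v
  simp [Lab, smul_eq_mul]
  ring

/-- For `f = g + conj h` harmonic, nonvanishing, avoiding `(-∞, 0]`, and `p > 1`,
the branch `f^p = exp(p log f)` (principal power) satisfies
`Δ(f^p) = p(p−1) f^{p−2}(f_x² + f_y²) = 4p(p−1) f^{p−2} g' conj(h')`. -/
theorem laplacian_power (U : Set ℂ) (hU : IsOpen U) (g h : ℂ → ℂ)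
    (hg : DifferentiableOn ℂ g U) (hh : DifferentiableOn ℂ h U)
    (f : ℂ → ℂ) (hf : ∀ z ∈ U, f z = g z + (starRingEnd ℂ) (h z))
    (hrange : ∀ z ∈ U, ¬((f z).im = 0 ∧ (f z).re ≤ 0))
    (p : ℝ) (hp : 1 < p) (z : ℂ) (hz : z ∈ U) :
    lapC (fun w => f w ^ (p : ℂ)) z
        = p * (p - 1) * f z ^ ((p : ℂ) - 2)
            * ((fderiv ℝ f z 1) ^ 2 + (fderiv ℝ f z Complex.I) ^ 2) ∧
      lapC (fun w => f w ^ (p : ℂ)) z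
        = 4 * p * (p - 1) * f z ^ ((p : ℂ) - 2)
            * deriv g z * (starRingEnd ℂ) (deriv h z) := by
  set c : ℂ := (p : ℂ) - 1 with hc
  have hgA : ∀ w ∈ U, HasDerivAt g (deriv g w) w := fun w hw =>
    (hg.differentiableAt (hU.mem_nhds hw)).hasDerivAt
  have hhA : ∀ w ∈ U, HasDerivAt h (deriv h w) w := fun w hw =>
    (hh.differentiableAt (hU.mem_nhds hw)).hasDerivAt
  have hfd : ∀ w ∈ U, HasFDerivAt f (Lab (deriv g w) ((starRingEnd ℂ) (deriv h w))) w := by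
    intro w hw
    have hev : (fun x => g x + (starRingEnd ℂ) (h x)) =ᶠ[nhds w] f := by
      filter_upwards [hU.mem_nhds hw] with x hx
      exact (hf x hx).symm
    exact (hasFDerivAt_addConj (hgA w hw) (hhA w hw)).congr_of_eventuallyEq hev.symm
  have hslit : ∀ w ∈ U, f w ∈ Complex.slitPlane := by
    intro w hw
    rw [Complex.mem_slitPlane_iff]
    by_contra hcon
    push_neg at hcon
    exact hrange w hw ⟨hcon.2, hcon.1⟩
  have hFd : ∀ w ∈ U, HasFDerivAt (fun x => f x ^ (p : ℂ))
      (Lab ((p : ℂ) * f w ^ c * deriv g w)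
           ((p : ℂ) * f w ^ c * (starRingEnd ℂ) (deriv h w))) w := by
    intro w hw
    have := hasFDerivAt_cpow_comp (p : ℂ) (hfd w hw) (hslit w hw)
    simpa [hc] using this
  -- eventual formulas for directional derivatives
  have hEv1 : (fun w => fderiv ℝ (fun x => f x ^ (p : ℂ)) w 1)
      =ᶠ[nhds z] fun w => (p : ℂ) * (f w ^ c *
        (deriv g w + (starRingEnd ℂ) (deriv h w))) := by
    filter_upwards [hU.mem_nhds hz] with w hw
    rw [(hFd w hw).fderiv, Lab_apply]
    simp; ring
  have hEvI : (fun w => fderiv ℝ (fun x => f x ^ (p : ℂ)) w Complex.I)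
      =ᶠ[nhds z] fun w => (p : ℂ) * (f w ^ c *
        ((deriv g w - (starRingEnd ℂ) (deriv h w)) * Complex.I)) := by
    filter_upwards [hU.mem_nhds hz] with w hw
    rw [(hFd w hw).fderiv, Lab_apply]
    simp [Complex.conj_I]; ring
  -- second derivatives of g, h
  have hg2 : HasDerivAt (deriv g) (deriv (deriv g) z) z :=
    (((hg.analyticOnNhd hU).deriv) z hz).differentiableAt.hasDerivAt
  have hh2 : HasDerivAt (deriv h) (deriv (deriv h) z) z :=
    (((hh.analyticOnNhd hU).deriv) z hz).differentiableAt.hasDerivAt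
  set A := deriv g z with hA
  set B := (starRingEnd ℂ) (deriv h z) with hB
  set A2 := deriv (deriv g) z with hA2
  set B2 := (starRingEnd ℂ) (deriv (deriv h) z) with hB2
  have hS : HasFDerivAt (fun w => deriv g w + (starRingEnd ℂ) (deriv h w)) (Lab A2 B2) z :=
    hasFDerivAt_addConj hg2 hh2
  have hSsub : HasFDerivAt (fun w => deriv g w - (starRingEnd ℂ) (deriv h w))
      (Lab A2 (-B2)) z := by
    have hneg : HasDerivAt (fun w => -(deriv h w)) (-(deriv (deriv h) z)) z := hh2.neg
    have := hasFDerivAt_addConj hg2 hneg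
    simp only [map_neg, ← sub_eq_add_neg] at this
    exact this
  have hSI : HasFDerivAt (fun w => (deriv g w - (starRingEnd ℂ) (deriv h w)) * Complex.I)
      (Complex.I • Lab A2 (-B2)) z := hSsub.mul_const Complex.I
  have hfc : HasFDerivAt (fun w => f w ^ c)
      (Lab (c * f z ^ (c - 1) * A) (c * f z ^ (c - 1) * B)) z :=
    hasFDerivAt_cpow_comp c (hfd z hz) (hslit z hz)
  have hG1 : HasFDerivAt (fun w => (p : ℂ) * (f w ^ c *
      (deriv g w + (starRingEnd ℂ) (deriv h w))))
      ((p : ℂ) • (f z ^ c • Lab A2 B2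
        + (A + B) • Lab (c * f z ^ (c - 1) * A) (c * f z ^ (c - 1) * B))) z :=
    (hfc.mul hS).const_mul _
  have hGI : HasFDerivAt (fun w => (p : ℂ) * (f w ^ c *
      ((deriv g w - (starRingEnd ℂ) (deriv h w)) * Complex.I)))
      ((p : ℂ) • (f z ^ c • (Complex.I • Lab A2 (-B2))
        + ((A - B) * Complex.I) • Lab (c * f z ^ (c - 1) * A) (c * f z ^ (c - 1) * B))) z :=
    (hfc.mul hSI).const_mul _
  have hcc : c - 1 = (p : ℂ) - 2 := by rw [hc]; ring
  have key : lapC (fun w => f w ^ (p : ℂ)) z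
      = 4 * p * (p - 1) * f z ^ ((p : ℂ) - 2) * A * B := by
    have e1 := hEv1.fderiv_eq (𝕜 := ℝ)
    have eI := hEvI.fderiv_eq (𝕜 := ℝ)
    rw [lapC, e1, eI, hG1.fderiv, hGI.fderiv]
    simp only [ContinuousLinearMap.add_apply, ContinuousLinearMap.smul_apply, Lab_apply,
      map_one, Complex.conj_I, smul_eq_mul, hcc, hc]
    rw [show (p:ℂ) - 1 - 1 = (p:ℂ) - 2 by ring]
    linear_combination ((p:ℂ) * (f z ^ ((p:ℂ) - 1)) * (A2 + B2)
      + (p:ℂ) * (((p:ℂ) - 1) * f z ^ ((p:ℂ) - 2)) * (A - B)^2) * Complex.I_sq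
  constructor
  · rw [key, (hfd z hz).fderiv, Lab_apply, Lab_apply]
    simp only [map_one, Complex.conj_I, mul_one]
    rw [← hA, ← hB]
    linear_combination (-(p:ℂ) * ((p:ℂ) - 1) * f z ^ ((p:ℂ) - 2) * (A - B)^2) * Complex.I_sq
  · rw [key]
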